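/- Let D ∈ ℕ, u₀ ∈ ℝ^D, let A_s, A_t, S_s, S_t ∈ ℝ^{D×D} with S_s, S_t, A_s invertible, and set Ψ_{ts} := A_t·A_s⁻¹. Define the Gaussian scores score_t(w) := −S_t⁻¹·(w − A_t·u₀) and score_s(w) := −S_s⁻¹·(w − A_s·u₀). Then for all u, u_s ∈ ℝ^D, score_t(u) = S_t⁻¹·Ψ_{ts}·S_s·score_s(u_s) − S_t⁻¹·(u − Ψ_{ts}·u_s). In particular, one evaluation of the score at any point (u_s, s) determines the score at every point (u, t). -/
import Mathlib


open Matrix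

/-- For Gaussian marginals, one score evaluation at `(u_s, s)` determines
the score at every `(u, t)`. -/
theorem gaussian_score_recovery (D : ℕ) (u₀ : Fin D → ℝ)
    (A_s A_t S_s S_t : Matrix (Fin D) (Fin D) ℝ)
    (hSs : IsUnit S_s) (hSt : IsUnit S_t) (hAs : IsUnit A_s) :
    ∀ u u_s : Fin D → ℝ,
      -(S_t⁻¹ *ᵥ (u - A_t *ᵥ u₀)) =
        (S_t⁻¹ * (A_t * A_s⁻¹) * S_s) *ᵥ (-(S_s⁻¹ *ᵥ (u_s - A_s *ᵥ u₀))) -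
        S_t⁻¹ *ᵥ (u - (A_t * A_s⁻¹) *ᵥ u_s) := by
  intro u u_s
  have hSsd : IsUnit S_s.det := (isUnit_iff_isUnit_det _).mp hSs
  have hAsd : IsUnit A_s.det := (isUnit_iff_isUnit_det _).mp hAs
  have hSsI : S_s * S_s⁻¹ = 1 := mul_nonsing_inv _ hSsd
  have hAsI : A_s⁻¹ * A_s = 1 := nonsing_inv_mul _ hAsd
  have key : S_t⁻¹ * (A_t * A_s⁻¹) * S_s * S_s⁻¹ = S_t⁻¹ * (A_t * A_s⁻¹) := by
    rw [mul_assoc, hSsI, mul_one]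
  have hAt : (A_t * A_s⁻¹) *ᵥ (A_s *ᵥ u₀) = A_t *ᵥ u₀ := by
    rw [mulVec_mulVec, mul_assoc, hAsI, mul_one]
  have hAt2 : S_t⁻¹ * (A_t * A_s⁻¹) * A_s = S_t⁻¹ * A_t := by
    rw [mul_assoc, mul_assoc, hAsI, mul_one]
  have key2 : S_t⁻¹ * (A_t * A_s⁻¹) * S_s * (S_s⁻¹ * A_s) = S_t⁻¹ * A_t := by
    rw [← mul_assoc, key, hAt2]
  simp only [mulVec_neg, mulVec_sub, mulVec_mulVec, key, key2, hAt2]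
  abel
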